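/- Let s, L, a, r, K, b, λ, ψ, μ, e be positive reals. Define E = rLKea - eLrs - LKbλs + bLKaψ + bLKaμ - rsψ + rKλs - rsμ and F = sλeL + sλμ - ψeLa, and assume λs + eLa ≠ 0 and F ≠ 0. Set P₆ = -L(-λs + aμ + aψ)/(λs + eLa), S₆ = s(μ + ψ + eL)/(λs + eLa), V₆ = s(μ + ψ + eL)E/(K(λs + eLa)F). Then (P₆, S₆, V₆, 0) is an equilibrium of the two-strain ecoepidemic competition model: s(1 - P₆/L)P₆ - aP₆S₆ = 0, r(1 - S₆/K)S₆ - bP₆S₆ - λV₆S₆ + ψV₆ = 0, and λV₆S₆ - ψV₆ - μV₆ - eP₆V₆ = 0. -/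

import Mathlib

/-- `E₆ = (P₆, S₆, V₆, 0)` is an equilibrium of the two-strain ecoepidemic competition
model, where `P₆ = -L(-λs + aμ + aψ)/(λs + eLa)`, `S₆ = s(μ+ψ+eL)/(λs + eLa)`,
`V₆ = s(μ+ψ+eL)E/(K(λs+eLa)F)` with
`E = rLKea - eLrs - LKbλs + bLKaψ + bLKaμ - rsψ + rKλs - rsμ` and
`F = sλeL + sλμ - ψeLa`. -/
theorem E6_is_equilibrium
    (s L a r K b lam psi mu e : ℝ)
    (hs : 0 < s) (hL : 0 < L) (ha : 0 < a) (hr : 0 < r) (hK : 0 < K) (hb : 0 < b)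
    (hlam : 0 < lam) (hpsi : 0 < psi) (hmu : 0 < mu) (he : 0 < e)
    (E F P₆ S₆ V₆ : ℝ)
    (hE : E = r * L * K * e * a - e * L * r * s - L * K * b * lam * s
        + b * L * K * a * psi + b * L * K * a * mu - r * s * psi
        + r * K * lam * s - r * s * mu)
    (hF : F = s * lam * e * L + s * lam * mu - psi * e * L * a)
    (hden : lam * s + e * L * a ≠ 0) (hFne : F ≠ 0)
    (hP₆ : P₆ = -(L * (-(lam * s) + a * mu + a * psi)) / (lam * s + e * L * a))
    (hS₆ : S₆ = s * (mu + psi + e * L) / (lam * s + e * L * a))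
    (hV₆ : V₆ = s * (mu + psi + e * L) * E / (K * (lam * s + e * L * a) * F)) :
    s * (1 - P₆ / L) * P₆ - a * P₆ * S₆ = 0 ∧
    r * (1 - S₆ / K) * S₆ - b * P₆ * S₆ - lam * V₆ * S₆ + psi * V₆ = 0 ∧
    lam * V₆ * S₆ - psi * V₆ - mu * V₆ - e * P₆ * V₆ = 0 := by
  subst hE hF hP₆ hS₆ hV₆
  have hF' : s * lam * (e * L + mu) - psi * e * L * a ≠ 0 := by
    contrapose! hFne; linarith
  have hK' : K ≠ 0 := hK.ne'
  have hL' : L ≠ 0 := hL.ne'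
  refine ⟨?_, ?_, ?_⟩ <;> field_simp <;> ring
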